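/- Let K be a simplicial complex on [n] and suppose x, y : [n] → ℝ have all values strictly positive and satisfy: x(S) > y(Sᶜ) for every S ⊆ [n] with S ∉ K, and x(T) < y(Tᶜ) for every T ∈ K. Then, setting z = x + y, for every A ⊆ [n] one has A ∈ K if and only if z(A) < y([n]); in particular K is the threshold complex with strictly positive weights z and quota y([n]). -/
import Mathlib


open Finset

/-- A simplicial complex on `[n]`: a family of subsets containing `∅` and
closed under taking subsets. -/
def IsComplex (n : ℕ) (K : Set (Finset (Fin n))) : Prop :=
  ∅ ∈ K ∧ ∀ A B : Finset (Fin n), A ⊆ B → B ∈ K → A ∈ K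

/-- No ghost vertices: every singleton is a face. -/
def NoGhost (n : ℕ) (K : Set (Finset (Fin n))) : Prop :=
  ∀ i : Fin n, ({i} : Finset (Fin n)) ∈ K

/-- `K` is a threshold complex: there are strictly positive weights `w` and a
quota `q` with `A ∈ K ↔ w(A) < q`. -/
def IsThreshold (n : ℕ) (K : Set (Finset (Fin n))) : Prop :=
  ∃ (w : Fin n → ℝ) (q : ℝ), (∀ i, 0 < w i) ∧
    ∀ A : Finset (Fin n), A ∈ K ↔ ∑ i ∈ A, w i < q

/-- A K-submodular function: a pair of vectors `x y : [n] → ℝ` satisfying, for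
every ridge datum `[n] = X1 ⊔ {c1,c2} ⊔ X2` (so `X2 = (X1 ∪ {c1,c2})ᶜ`) with
`X1 ∈ K` and `X2 ∈ K°` (i.e. `X2ᶜ = X1 ∪ {c1,c2} ∉ K`):
the Λ-, V- and X-configuration inequalities. -/
def IsKSubmodular (n : ℕ) (K : Set (Finset (Fin n))) (x y : Fin n → ℝ) : Prop :=
  ∀ (X1 : Finset (Fin n)) (c1 c2 : Fin n),
    c1 ≠ c2 → c1 ∉ X1 → c2 ∉ X1 → X1 ∈ K → insert c1 (insert c2 X1) ∉ K →
    ((insert c1 X1 ∈ K → insert c2 X1 ∈ K →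
        ∑ i ∈ X1, x i + x c1 + x c2 > ∑ j ∈ (insert c1 (insert c2 X1))ᶜ, y j) ∧
     (insert c1 X1 ∉ K → insert c2 X1 ∉ K →
        ∑ j ∈ (insert c1 (insert c2 X1))ᶜ, y j + y c1 + y c2 > ∑ i ∈ X1, x i) ∧
     (insert c2 X1 ∈ K → insert c1 X1 ∉ K → x c2 + y c2 > 0))

/-- A non-strict K-submodular function: the Λ- and V-inequalities are non-strict,
and for X-configurations with distinguished element `c2` one requires
`x c2 > 0` and `y c2 > 0`. -/
def IsNonStrictKSubmodular (n : ℕ) (K : Set (Finset (Fin n))) (x y : Fin n → ℝ) : Prop :=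
  ∀ (X1 : Finset (Fin n)) (c1 c2 : Fin n),
    c1 ≠ c2 → c1 ∉ X1 → c2 ∉ X1 → X1 ∈ K → insert c1 (insert c2 X1) ∉ K →
    ((insert c1 X1 ∈ K → insert c2 X1 ∈ K →
        ∑ i ∈ X1, x i + x c1 + x c2 ≥ ∑ j ∈ (insert c1 (insert c2 X1))ᶜ, y j) ∧
     (insert c1 X1 ∉ K → insert c2 X1 ∉ K →
        ∑ j ∈ (insert c1 (insert c2 X1))ᶜ, y j + y c1 + y c2 ≥ ∑ i ∈ X1, x i) ∧
     (insert c2 X1 ∈ K → insert c1 X1 ∉ K → 0 < x c2 ∧ 0 < y c2))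

/-- `K` (the set of losing coalitions) is roughly weighted with strictly positive
weights `w` and quota `q > 0`. -/
def RoughlyWeighted (n : ℕ) (K : Set (Finset (Fin n))) (w : Fin n → ℝ) (q : ℝ) : Prop :=
  (∀ i, 0 < w i) ∧ 0 < q ∧ ∀ X : Finset (Fin n),
    (q < ∑ i ∈ X, w i → X ∉ K) ∧ (∑ i ∈ X, w i < q → X ∈ K)

/-- If `x, y` are strictly positive and satisfy
`x(S) > y(Sᶜ)` for every non-face `S` and `x(T) < y(Tᶜ)` for every face `T`,
then with `z = x + y` one has `A ∈ K ↔ z(A) < y([n])` for every `A`; in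
particular `K` is the threshold complex with strictly positive weights `z` and
quota `y([n])`. -/
theorem threshold_of_system (n : ℕ) (K : Set (Finset (Fin n)))
    (hK : IsComplex n K) (x y : Fin n → ℝ)
    (hx : ∀ i, 0 < x i) (hy : ∀ i, 0 < y i)
    (h1 : ∀ S : Finset (Fin n), S ∉ K → ∑ i ∈ S, x i > ∑ j ∈ Sᶜ, y j)
    (h2 : ∀ T : Finset (Fin n), T ∈ K → ∑ i ∈ T, x i < ∑ j ∈ Tᶜ, y j) :
    (∀ i, 0 < x i + y i) ∧
    (∀ A : Finset (Fin n), A ∈ K ↔ ∑ i ∈ A, (x i + y i) < ∑ i, y i) := by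
  refine ⟨fun i => add_pos (hx i) (hy i), fun A => ?_⟩
  have key : ∑ i ∈ A, (x i + y i) - ∑ i, y i = ∑ i ∈ A, x i - ∑ j ∈ Aᶜ, y j := by
    rw [Finset.sum_add_distrib]
    have := Finset.sum_compl_add_sum A y
    linarith
  constructor
  · intro hA
    have := h2 A hA
    linarith
  · intro h
    by_contra hA
    have := h1 A hA
    linarith
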